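/- arXiv:2211.06794 — 2 statements merged into one kernel-verified Lean document; each statement's English description precedes it below -/
import Mathlib

section
/- For any positive definite operator ρ on a finite-dimensional complex inner product space, the operator logarithm admits the integral representation ln ρ = ∫₀^∞ ( (1+s)^{-1} · 1 − (ρ + s·1)^{-1} ) ds, where the integral converges in operator norm. -/
open MeasureTheory Matrix Set Filter
open scoped Matrix.Norms.L2Operator ComplexOrder
open scoped Topology

section scalar
lemma scalar_log_integral {l : ℝ} (hl : 0 < l) :
    IntegrableOn (fun s : ℝ => (1 + s)⁻¹ - (l + s)⁻¹) (Set.Ioi 0) volume ∧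
    ∫ s in Set.Ioi 0, ((1 + s)⁻¹ - (l + s)⁻¹) = Real.log l := by
  set F : ℝ → ℝ := fun s => Real.log (1 + s) - Real.log (l + s) with hF
  have hderiv : ∀ x ∈ Ici (0:ℝ), HasDerivAt F ((1 + x)⁻¹ - (l + x)⁻¹) x := by
    intro x hx
    have hx0 : (0:ℝ) ≤ x := hx
    have h1 : HasDerivAt (fun s : ℝ => Real.log (1 + s)) (1 + x)⁻¹ x := by
      have := ((hasDerivAt_id x).const_add 1).log (by positivity)
      simpa using this
    have h2 : HasDerivAt (fun s : ℝ => Real.log (l + s)) (l + x)⁻¹ x := by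
      have := ((hasDerivAt_id x).const_add l).log (by positivity)
      simpa using this
    exact h1.sub h2
  have htend : Tendsto F atTop (𝓝 0) := by
    have h1 : Tendsto (fun s : ℝ => (1 + s) / (l + s)) atTop (𝓝 1) := by
      have h2 : Tendsto (fun s : ℝ => (s⁻¹ + 1) / (l * s⁻¹ + 1)) atTop (𝓝 1) := by
        have hnum : Tendsto (fun s : ℝ => s⁻¹ + 1) atTop (𝓝 1) := by
          simpa using tendsto_inv_atTop_zero.add (tendsto_const_nhds (x := (1:ℝ)))
        have hden : Tendsto (fun s : ℝ => l * s⁻¹ + 1) atTop (𝓝 1) := by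
          simpa using ((tendsto_inv_atTop_zero.const_mul l).add (tendsto_const_nhds (x := (1:ℝ))))
        have := hnum.div hden one_ne_zero
        rw [div_one] at this
        exact this
      refine h2.congr' ?_
      filter_upwards [eventually_gt_atTop (0:ℝ)] with s hs
      field_simp
    have h3 : Tendsto F atTop (𝓝 (Real.log 1)) := by
      have hlog := (Real.continuousAt_log one_ne_zero).tendsto.comp h1
      refine hlog.congr' ?_
      filter_upwards [eventually_gt_atTop (0:ℝ)] with s hs
      simp only [Function.comp_apply, hF]
      rw [Real.log_div (by positivity) (by positivity)]
    simpa using h3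
  have hF0 : F 0 = -Real.log l := by simp [hF]
  rcases le_or_gt 1 l with hcase | hcase
  · have hpos : ∀ x ∈ Ioi (0:ℝ), 0 ≤ (1 + x)⁻¹ - (l + x)⁻¹ := by
      intro x hx
      have hx' : (0:ℝ) < x := hx
      have : (l + x)⁻¹ ≤ (1 + x)⁻¹ := by
        apply inv_anti₀ (by positivity) (by linarith)
      linarith
    refine ⟨integrableOn_Ioi_deriv_of_nonneg' hderiv hpos htend, ?_⟩
    rw [integral_Ioi_of_hasDerivAt_of_nonneg' hderiv hpos htend, hF0]
    ring
  · have hneg : ∀ x ∈ Ioi (0:ℝ), (1 + x)⁻¹ - (l + x)⁻¹ ≤ 0 := by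
      intro x hx
      have hx' : (0:ℝ) < x := hx
      have : (1 + x)⁻¹ ≤ (l + x)⁻¹ := by
        apply inv_anti₀ (by positivity) (by linarith)
      linarith
    refine ⟨integrableOn_Ioi_deriv_of_nonpos' hderiv hneg htend, ?_⟩
    rw [integral_Ioi_of_hasDerivAt_of_nonpos' hderiv hneg htend, hF0]
    ring

end scalar


/-- For a positive definite operator `ρ` on a finite-dimensional complex Hilbert space,
`ln ρ = ∫₀^∞ ((1+s)⁻¹ • 1 − (ρ + s•1)⁻¹) ds`, the integral converging (in operator norm). -/
theorem log_integral_representation {n : Type*} [Fintype n] [DecidableEq n]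
    (ρ : Matrix n n ℂ) (hρ : ρ.PosDef) :
    IntegrableOn
      (fun s : ℝ => ((1 + s : ℂ))⁻¹ • (1 : Matrix n n ℂ) - (ρ + (s : ℂ) • 1)⁻¹)
      (Set.Ioi 0) volume ∧
    (∫ s : ℝ in Set.Ioi 0,
        (((1 + s : ℂ))⁻¹ • (1 : Matrix n n ℂ) - (ρ + (s : ℂ) • 1)⁻¹)) =
      hρ.1.cfc Real.log := by
  classical
  set hH := hρ.1 with hHdef
  set U : Matrix n n ℂ := (hH.eigenvectorUnitary : Matrix n n ℂ) with hUdef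
  set eig : n → ℝ := hH.eigenvalues with heigdef
  have heig : ∀ i, 0 < eig i := fun i => hρ.eigenvalues_pos i
  set M : n → Matrix n n ℂ := fun i => U * Matrix.single i i 1 * star U with hM
  have hUU : U * star U = 1 := Matrix.mem_unitaryGroup_iff.mp hH.eigenvectorUnitary.2
  have hUU' : star U * U = 1 := Matrix.mem_unitaryGroup_iff'.mp hH.eigenvectorUnitary.2
  -- conjugated diagonal as a sum of rank-one pieces
  have key : ∀ w : n → ℝ, U * Matrix.diagonal (fun i => (w i : ℂ)) * star U
      = ∑ i, (w i : ℂ) • M i := by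
    intro w
    have hdiag : Matrix.diagonal (fun i => (w i : ℂ))
        = ∑ i, (w i : ℂ) • Matrix.single i i (1 : ℂ) := by
      ext a b
      simp only [Matrix.sum_apply, Matrix.smul_apply, Matrix.single,
        Matrix.of_apply, smul_eq_mul, mul_ite, mul_one, mul_zero, ite_and]
      rw [Finset.sum_ite_eq' Finset.univ a (fun x => if x = b then (w x : ℂ) else 0)]
      simp [Matrix.diagonal_apply]
    rw [hdiag, Matrix.mul_sum, Finset.sum_mul]
    refine Finset.sum_congr rfl fun i _ => ?_
    rw [mul_smul_comm, smul_mul_assoc]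
  -- conjugation multiplies nicely
  have swap : ∀ A B : Matrix n n ℂ,
      (U * A * star U) * (U * B * star U) = U * (A * B) * star U := by
    intro A B
    simp only [mul_assoc]
    rw [← mul_assoc (star U) U (B * star U), hUU', one_mul]
  have hconst : ∀ c : ℂ, U * Matrix.diagonal (fun _ : n => c) * star U = c • 1 := by
    intro c
    have h1 : Matrix.diagonal (fun _ : n => c) = c • (1 : Matrix n n ℂ) := by
      ext a b
      by_cases h : a = b <;> simp [Matrix.diagonal_apply, Matrix.one_apply, h]
    rw [h1, mul_smul_comm, smul_mul_assoc, mul_one, hUU]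
  -- ρ + s•1 conjugated
  have hsum : ∀ s : ℝ, ρ + (s : ℂ) • 1
      = U * Matrix.diagonal (fun i => ((eig i + s : ℝ) : ℂ)) * star U := by
    intro s
    have h1 : Matrix.diagonal (fun i => ((eig i + s : ℝ) : ℂ))
        = Matrix.diagonal (RCLike.ofReal ∘ eig) + Matrix.diagonal (fun _ : n => (s : ℂ)) := by
      rw [Matrix.diagonal_add]
      congr 1
      ext i
      push_cast
      rfl
    rw [h1, mul_add, add_mul, hconst s]
    congr 1
    exact hH.spectral_theorem
  have hinv : ∀ s : ℝ, 0 ≤ s → (ρ + (s : ℂ) • 1)⁻¹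
      = U * Matrix.diagonal (fun i => (((eig i + s : ℝ) : ℂ))⁻¹) * star U := by
    intro s hs
    refine Matrix.inv_eq_right_inv ?_
    rw [hsum s, swap, Matrix.diagonal_mul_diagonal]
    have : (fun i => ((eig i + s : ℝ) : ℂ) * (((eig i + s : ℝ) : ℂ))⁻¹) = fun _ => 1 := by
      ext i
      rw [mul_inv_cancel₀]
      exact_mod_cast ne_of_gt (by have := heig i; linarith : (0:ℝ) < eig i + s)
    rw [this]
    have : Matrix.diagonal (fun _ : n => (1 : ℂ)) = (1 : Matrix n n ℂ) := Matrix.diagonal_one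
    rw [this, mul_one, hUU]
  -- pointwise identity on Ioi 0
  set c : n → ℝ → ℝ := fun i s => (1 + s)⁻¹ - (eig i + s)⁻¹ with hc
  have eq1 : ∀ s ∈ Set.Ioi (0:ℝ),
      ((1 + s : ℂ))⁻¹ • (1 : Matrix n n ℂ) - (ρ + (s : ℂ) • 1)⁻¹
        = ∑ i, ((c i s : ℝ) : ℂ) • M i := by
    intro s hs
    have hs' : (0:ℝ) ≤ s := le_of_lt hs
    rw [hinv s hs', ← key (fun i => c i s)]
    have h2 : ((1 + s : ℂ))⁻¹ • (1 : Matrix n n ℂ)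
        = U * Matrix.diagonal (fun _ : n => (((1 + s : ℝ) : ℂ))⁻¹) * star U := by
      rw [hconst]
      push_cast
      rfl
    rw [h2, ← sub_mul, ← mul_sub, Matrix.diagonal_sub]
    congr 1
    congr 1
    congr 1
    ext i
    simp only [hc]
    push_cast
    ring
  have hint : ∀ i : n, IntegrableOn (fun s => ((c i s : ℝ) : ℂ)) (Set.Ioi 0) volume :=
    fun i => ((scalar_log_integral (heig i)).1).ofReal
  have hgint : IntegrableOn (fun s => ∑ i, ((c i s : ℝ) : ℂ) • M i) (Set.Ioi 0) volume :=
    integrable_finset_sum _ fun i _ => (hint i).smul_const (M i)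
  constructor
  · exact hgint.congr_fun (fun s hs => (eq1 s hs).symm) measurableSet_Ioi
  · rw [setIntegral_congr_fun measurableSet_Ioi eq1,
      integral_finset_sum _ (fun i _ => (hint i).smul_const (M i))]
    have hi : ∀ i : n, (∫ s in Set.Ioi (0:ℝ), ((c i s : ℝ) : ℂ) • M i)
        = ((Real.log (eig i) : ℝ) : ℂ) • M i := by
      intro i
      rw [integral_smul_const]
      congr 1
      rw [show (fun s : ℝ => ((c i s : ℝ) : ℂ)) = fun s : ℝ => ((c i s : ℝ) : ℂ) from rfl]
      rw [← (scalar_log_integral (heig i)).2]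
      exact integral_ofReal
    simp_rw [hi]
    rw [← key (fun i => Real.log (eig i))]
    rfl
end

section
/- Let ρ̃ be a positive definite operator whose smallest eigenvalue is λ_min > 0, and let Δρ be self-adjoint. Then | tr( ∫₀^∞ s (ρ̃+s·1)^{-1} Δρ (ρ̃+s·1)^{-1} Δρ (ρ̃+s·1)^{-1} ds ) | ≤ ‖Δρ‖₁² / (2 λ_min), where ‖·‖₁ denotes the trace norm. -/
open MeasureTheory Matrix
open scoped Matrix.Norms.L2Operator ComplexOrder

/-- The square root of a positive semidefinite matrix, as defined in Mathlib of December 2024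
(`Matrix.PosSemidef.sqrt`, since removed from Mathlib). -/
noncomputable def Matrix.PosSemidef.sqrt {n 𝕜 : Type*} [Fintype n] [RCLike 𝕜] [DecidableEq n]
    {A : Matrix n n 𝕜} (hA : A.PosSemidef) : Matrix n n 𝕜 :=
  hA.1.eigenvectorUnitary.1 * diagonal ((↑) ∘ (fun i => Real.sqrt (hA.1.eigenvalues i))) *
    (star hA.1.eigenvectorUnitary : Matrix n n 𝕜)

/-- The trace norm `‖A‖₁ = tr √(Aᴴ A)` of a matrix. -/
noncomputable def traceNorm {m n : Type*} [Fintype m] [Fintype n] [DecidableEq n]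
    (A : Matrix m n ℂ) : ℝ :=
  ((Matrix.posSemidef_conjTranspose_mul_self A).sqrt).trace.re

section helpers
variable {n : Type*} [Fintype n] [DecidableEq n]

lemma traceAux (M : Matrix n n ℂ) :
    (Mᴴ * M).trace = ((∑ i, ∑ j, Complex.normSq (M i j) : ℝ) : ℂ) := by
  simp only [Matrix.trace, Matrix.diag, Matrix.mul_apply, Matrix.conjTranspose_apply]
  push_cast
  rw [Finset.sum_comm]
  refine Finset.sum_congr rfl fun i _ => Finset.sum_congr rfl fun j _ => ?_
  rw [Complex.normSq_eq_conj_mul_self]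
  rfl

lemma diagNormAux (c : n → ℂ) (b : ℝ)
    (hb : 0 ≤ b) (h : ∀ i, ‖c i‖ ≤ b) : ‖Matrix.diagonal c‖ ≤ b := by
  rw [Matrix.l2_opNorm_def]
  refine ContinuousLinearMap.opNorm_le_bound _ hb fun x => ?_
  have hx : ((Matrix.toEuclideanLin.trans LinearMap.toContinuousLinearMap) (Matrix.diagonal c)) x
      = (WithLp.equiv 2 (n → ℂ)).symm (Matrix.diagonal c *ᵥ (WithLp.equiv 2 (n → ℂ) x)) := rfl
  rw [hx, EuclideanSpace.norm_eq, EuclideanSpace.norm_eq]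
  rw [← Real.sqrt_sq hb, ← Real.sqrt_mul (sq_nonneg b), Finset.mul_sum]
  apply Real.sqrt_le_sqrt
  apply Finset.sum_le_sum
  intro i _
  simp only [WithLp.equiv_symm_apply, WithLp.ofLp_toLp, Matrix.mulVec_diagonal]
  rw [norm_mul, ← mul_pow]
  have : ‖c i‖ * ‖(WithLp.equiv 2 (n → ℂ)) x i‖ ≤ b * ‖x i‖ := by
    apply mul_le_mul_of_nonneg_right _ (norm_nonneg _)
    exact h i
  exact pow_le_pow_left₀ (by positivity) this 2

lemma integralAux {l : ℝ} (hl : 0 < l) :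
    IntegrableOn (fun s : ℝ => s * ((l + s)⁻¹) ^ 3) (Set.Ioi 0) ∧
    ∫ s : ℝ in Set.Ioi 0, s * ((l + s)⁻¹) ^ 3 = 1 / (2 * l) := by
  set G : ℝ → ℝ := fun s => -(l + s)⁻¹ + (l / 2) * ((l + s)⁻¹) ^ 2 with hG
  have hderiv : ∀ s ∈ Set.Ici (0:ℝ), HasDerivAt G (s * ((l + s)⁻¹) ^ 3) s := by
    intro s hs
    have h0 : (0:ℝ) < l + s := by have : (0:ℝ) ≤ s := hs; linarith
    have h1 : HasDerivAt (fun x : ℝ => l + x) 1 s := by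
      simpa using (hasDerivAt_id s).const_add l
    have h2 : HasDerivAt (fun x : ℝ => (l + x)⁻¹) (-1 / (l + s) ^ 2) s := h1.inv h0.ne'
    have h3 := h2.neg.add ((h2.pow 2).const_mul (l / 2))
    refine h3.congr_deriv ?_
    have hne : (l + s) ≠ 0 := h0.ne'
    norm_num
    field_simp
    ring
  have hpos' : ∀ s ∈ Set.Ioi (0:ℝ), 0 ≤ s * ((l + s)⁻¹) ^ 3 := by
    intro s hs
    have hs' : (0:ℝ) < s := hs
    have : (0:ℝ) < l + s := by linarith
    positivity
  have htend : Filter.Tendsto G Filter.atTop (nhds 0) := by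
    have h1 : Filter.Tendsto (fun s : ℝ => (l + s)⁻¹) Filter.atTop (nhds 0) := by
      apply Filter.Tendsto.inv_tendsto_atTop
      exact Filter.tendsto_atTop_add_const_left _ l Filter.tendsto_id
    have := h1.neg.add ((h1.pow 2).const_mul (l / 2))
    simpa [hG, inv_pow] using this
  refine ⟨integrableOn_Ioi_deriv_of_nonneg' hderiv hpos' htend, ?_⟩
  rw [integral_Ioi_of_hasDerivAt_of_nonneg' hderiv hpos' htend]
  simp only [hG, add_zero]
  field_simp
  ring

open scoped MatrixOrder in
lemma eqSqrtAux {A B : Matrix n n ℂ} (hA : A.PosSemidef) (hB : B.PosSemidef) (h : A ^ 2 = B) :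
    A = hB.sqrt := by
  set S := hB.sqrt with hS
  have hSpsd : S.PosSemidef := by
    have hD : (diagonal ((↑) ∘ fun i => Real.sqrt (hB.1.eigenvalues i)) : Matrix n n ℂ).PosSemidef := by
      rw [posSemidef_diagonal_iff]; intro i
      exact Complex.zero_le_real.mpr (Real.sqrt_nonneg _)
    have := hD.mul_mul_conjTranspose_same (hB.1.eigenvectorUnitary : Matrix n n ℂ)
    simpa [hS, Matrix.PosSemidef.sqrt, Matrix.star_eq_conjTranspose] using this
  have hSS : S * S = B := by
    conv_rhs => rw [hB.1.spectral_theorem, Unitary.conjStarAlgAut_apply]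
    simp only [hS, Matrix.PosSemidef.sqrt, Matrix.mul_assoc]
    rw [← Matrix.mul_assoc (star _ : Matrix n n ℂ) ((hB.1.eigenvectorUnitary : Matrix n n ℂ)),
      Unitary.coe_star_mul_self, Matrix.one_mul, ← Matrix.mul_assoc (diagonal _),
      diagonal_mul_diagonal]
    refine congrArg _ (congrArg (· * _) (congrArg diagonal (funext fun i => ?_)))
    simp only [Function.comp]
    rw [← RCLike.ofReal_mul, Real.mul_self_sqrt (hB.eigenvalues_nonneg i)]
  exact (CFC.mul_self_eq_mul_self_iff A S hA.nonneg hSpsd.nonneg).1 (by rw [← pow_two, h, hSS])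

end helpers

/-- For `ρ̃` positive definite with smallest eigenvalue `λ_min` and `Δρ` self-adjoint,
`|tr ∫₀^∞ s (ρ̃+s)⁻¹ Δρ (ρ̃+s)⁻¹ Δρ (ρ̃+s)⁻¹ ds| ≤ ‖Δρ‖₁² / (2 λ_min)`. -/
theorem abs_trace_second_order_le {n : Type*} [Fintype n] [DecidableEq n]
    (ρ : Matrix n n ℂ) (hρ : ρ.PosDef) (Δ : Matrix n n ℂ) (hΔ : Δ.IsHermitian)
    (lamMin : ℝ) (hlam : IsLeast (Set.range hρ.1.eigenvalues) lamMin) (hpos : 0 < lamMin) :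
    ‖((∫ s : ℝ in Set.Ioi 0,
          ((s : ℂ) • ((ρ + (s : ℂ) • 1)⁻¹ * Δ * (ρ + (s : ℂ) • 1)⁻¹ * Δ *
            (ρ + (s : ℂ) • 1)⁻¹))).trace)‖ ≤
      traceNorm Δ ^ 2 / (2 * lamMin) := by
  classical
  rcases isEmpty_or_nonempty n with hn | hn
  · have h0 : ∀ M : Matrix n n ℂ, M.trace = 0 := fun M => by
      simp [Matrix.trace, Finset.univ_eq_empty]
    rw [h0]
    have hT0 : traceNorm Δ = 0 := by simp [traceNorm, h0]
    rw [hT0, norm_zero]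
    positivity
  -- main case
  set d := hρ.1.eigenvalues with hd_def
  have hd : ∀ i, lamMin ≤ d i := fun i => hlam.2 ⟨i, rfl⟩
  have hd0 : ∀ i, 0 < d i := fun i => lt_of_lt_of_le hpos (hd i)
  set U : Matrix n n ℂ := (hρ.1.eigenvectorUnitary : Matrix n n ℂ) with hU_def
  have hU1 : star U * U = 1 := Unitary.coe_star_mul_self hρ.1.eigenvectorUnitary
  have hU2 : U * star U = 1 := Unitary.coe_mul_star_self hρ.1.eigenvectorUnitary
  set B : Matrix n n ℂ := star U * Δ * U with hB_def
  have hB : Bᴴ = B := by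
    simp only [hB_def, Matrix.conjTranspose_mul, Matrix.conjTranspose_conjTranspose,
      Matrix.star_eq_conjTranspose, hΔ.eq, Matrix.mul_assoc]
  have hBji : ∀ i j, B j i = (starRingEnd ℂ) (B i j) := by
    intro i j
    conv_lhs => rw [← hB]
    simp [Matrix.conjTranspose_apply]
  -- the left-inverse identity
  have hmulinv : ∀ s : ℝ, 0 < s →
      (U * Matrix.diagonal (fun i => (((d i + s : ℝ) : ℂ))⁻¹) * star U) * (ρ + (s:ℂ) • 1) = 1 := by
    intro s hs
    have hne : ∀ i, ((d i + s : ℝ) : ℂ) ≠ 0 := fun i => by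
      have : (0:ℝ) < d i + s := by have := hd0 i; linarith
      exact_mod_cast this.ne'
    have h1 : ρ + (s:ℂ) • 1 = U * Matrix.diagonal (fun i => ((d i + s : ℝ) : ℂ)) * star U := by
      conv_lhs => rw [hρ.1.spectral_theorem, Unitary.conjStarAlgAut_apply]
      have hdiag : Matrix.diagonal (fun i => ((d i + s : ℝ) : ℂ))
          = Matrix.diagonal (RCLike.ofReal ∘ d) + (s:ℂ) • (1 : Matrix n n ℂ) := by
        rw [Matrix.smul_one_eq_diagonal, Matrix.diagonal_add]
        congr 1
        funext i
        push_cast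
        rfl
      rw [hdiag, Matrix.mul_add, Matrix.add_mul]
      congr 1
      rw [Matrix.mul_smul, Matrix.mul_one, Matrix.smul_mul, hU2]
    rw [h1]
    have h2 : (U * Matrix.diagonal (fun i => (((d i + s : ℝ) : ℂ))⁻¹) * star U) *
        (U * Matrix.diagonal (fun i => ((d i + s : ℝ) : ℂ)) * star U)
        = U * (Matrix.diagonal (fun i => (((d i + s : ℝ) : ℂ))⁻¹) * (star U * U) *
            Matrix.diagonal (fun i => ((d i + s : ℝ) : ℂ))) * star U := by
      simp only [Matrix.mul_assoc]
    rw [h2, hU1, Matrix.mul_one, Matrix.diagonal_mul_diagonal]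
    have h3 : (fun i => (((d i + s : ℝ) : ℂ))⁻¹ * ((d i + s : ℝ) : ℂ)) = fun _ => (1:ℂ) :=
      funext fun i => inv_mul_cancel₀ (hne i)
    rw [h3, Matrix.diagonal_one, Matrix.mul_one, hU2]
  have hRdef : ∀ s : ℝ, 0 < s → (ρ + (s:ℂ) • 1)⁻¹
      = U * Matrix.diagonal (fun i => (((d i + s : ℝ) : ℂ))⁻¹) * star U := fun s hs =>
    Matrix.inv_eq_left_inv (hmulinv s hs)
  set K : ℝ := ∑ i, ∑ j, Complex.normSq (B i j) with hK_def
  -- trace formula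
  have htr : ∀ s : ℝ, 0 < s →
      ((ρ + (s:ℂ) • 1)⁻¹ * Δ * (ρ + (s:ℂ) • 1)⁻¹ * Δ * (ρ + (s:ℂ) • 1)⁻¹).trace
      = ((∑ i, ∑ j, ((d i + s)⁻¹) ^ 2 * (d j + s)⁻¹ * Complex.normSq (B i j) : ℝ) : ℂ) := by
    intro s hs
    rw [hRdef s hs]
    set D : Matrix n n ℂ := Matrix.diagonal (fun i => (((d i + s : ℝ) : ℂ))⁻¹) with hD_def
    have h1 : (U * D * star U) * Δ * (U * D * star U) * Δ * (U * D * star U)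
        = U * (D * B * D * B * D) * star U := by
      simp only [hB_def, Matrix.mul_assoc]
    rw [h1, Matrix.trace_mul_cycle, ← Matrix.mul_assoc, hU1, Matrix.one_mul]
    have h2 : D * B * D * B * D = (D * B * D) * (B * D) := by simp only [Matrix.mul_assoc]
    rw [h2]
    have h3 : ∀ i j, (D * B * D) i j
        = (((d i + s : ℝ) : ℂ))⁻¹ * B i j * (((d j + s : ℝ) : ℂ))⁻¹ := by
      intro i j; rw [Matrix.mul_diagonal, Matrix.diagonal_mul]
    have h4 : ∀ j i, (B * D) j i = B j i * (((d i + s : ℝ) : ℂ))⁻¹ := fun j i =>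
      Matrix.mul_diagonal _ _ _ _
    simp only [Matrix.trace, Matrix.diag]
    push_cast
    refine Finset.sum_congr rfl fun i _ => ?_
    rw [Matrix.mul_apply]
    refine Finset.sum_congr rfl fun j _ => ?_
    rw [h3 i j, h4 j i, hBji i j]
    rw [show (((d i + s : ℝ) : ℂ))⁻¹ * B i j * (((d j + s : ℝ) : ℂ))⁻¹ *
          ((starRingEnd ℂ) (B i j) * (((d i + s : ℝ) : ℂ))⁻¹)
        = ((((d i + s : ℝ) : ℂ))⁻¹ ^ 2 * (((d j + s : ℝ) : ℂ))⁻¹) *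
          (B i j * (starRingEnd ℂ) (B i j)) from by ring, Complex.mul_conj]
    push_cast
    ring
  -- pointwise sum bound
  have hbound : ∀ s : ℝ, 0 < s →
      (∑ i, ∑ j, ((d i + s)⁻¹) ^ 2 * (d j + s)⁻¹ * Complex.normSq (B i j))
        ≤ ((lamMin + s)⁻¹) ^ 3 * K := by
    intro s hs
    have hls : (0:ℝ) < lamMin + s := by linarith
    calc (∑ i, ∑ j, ((d i + s)⁻¹) ^ 2 * (d j + s)⁻¹ * Complex.normSq (B i j))
        ≤ ∑ i, ∑ j, ((lamMin + s)⁻¹) ^ 2 * (lamMin + s)⁻¹ * Complex.normSq (B i j) := by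
          refine Finset.sum_le_sum fun i _ => Finset.sum_le_sum fun j _ => ?_
          have hdi : (0:ℝ) < d i + s := by linarith [hd0 i]
          have hdj : (0:ℝ) < d j + s := by linarith [hd0 j]
          have h1 : (d i + s)⁻¹ ≤ (lamMin + s)⁻¹ :=
            inv_anti₀ hls (by linarith [hd i])
          have h2 : (d j + s)⁻¹ ≤ (lamMin + s)⁻¹ :=
            inv_anti₀ hls (by linarith [hd j])
          apply mul_le_mul_of_nonneg_right _ (Complex.normSq_nonneg _)
          apply mul_le_mul (pow_le_pow_left₀ (inv_nonneg.2 hdi.le) h1 2) h2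
            (inv_nonneg.2 hdj.le) (by positivity)
      _ = ((lamMin + s)⁻¹) ^ 3 * K := by
          simp only [← Finset.mul_sum, hK_def]
          ring
  have hsum_nonneg : ∀ s : ℝ, 0 < s →
      0 ≤ ∑ i, ∑ j, ((d i + s)⁻¹) ^ 2 * (d j + s)⁻¹ * Complex.normSq (B i j) := by
    intro s hs
    refine Finset.sum_nonneg fun i _ => Finset.sum_nonneg fun j _ => ?_
    have hdi : (0:ℝ) < d i + s := by linarith [hd0 i]
    have hdj : (0:ℝ) < d j + s := by linarith [hd0 j]
    have := Complex.normSq_nonneg (B i j)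
    positivity
  -- K in terms of Δ
  have hKB : K = ∑ i, ∑ j, Complex.normSq (Δ i j) := by
    apply Complex.ofReal_injective
    have h5 : B * B = star U * (Δ * Δ) * U := by
      have e1 : B * B = star U * Δ * (U * star U) * Δ * U := by
        simp only [hB_def, Matrix.mul_assoc]
      rw [e1, hU2, Matrix.mul_one]
      simp only [Matrix.mul_assoc]
    calc ((K : ℝ) : ℂ) = (Bᴴ * B).trace := (traceAux B).symm
      _ = (star U * (Δ * Δ) * U).trace := by rw [hB, h5]
      _ = (Δ * Δ).trace := by
          rw [Matrix.trace_mul_cycle, ← Matrix.mul_assoc, hU2, Matrix.one_mul]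
      _ = (Δᴴ * Δ).trace := by rw [hΔ.eq]
      _ = _ := traceAux Δ
  -- eigen-decomposition of Δ
  set μ := hΔ.eigenvalues with hμ_def
  set V : Matrix n n ℂ := (hΔ.eigenvectorUnitary : Matrix n n ℂ) with hV_def
  have hV1 : star V * V = 1 := Unitary.coe_star_mul_self hΔ.eigenvectorUnitary
  have hV2 : V * star V = 1 := Unitary.coe_mul_star_self hΔ.eigenvectorUnitary
  have hΔΔ : Δᴴ * Δ = V * Matrix.diagonal (fun i => ((μ i : ℝ) : ℂ) * ((μ i : ℝ) : ℂ)) * star V := by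
    rw [hΔ.eq]
    conv_lhs => rw [hΔ.spectral_theorem, Unitary.conjStarAlgAut_apply]
    rw [← hV_def, ← hμ_def]
    have e1 : (V * Matrix.diagonal (RCLike.ofReal ∘ μ) * star V) *
        (V * Matrix.diagonal (RCLike.ofReal ∘ μ) * star V)
        = V * (Matrix.diagonal (RCLike.ofReal ∘ μ) * (star V * V) *
            Matrix.diagonal (RCLike.ofReal ∘ μ)) * star V := by
      simp only [Matrix.mul_assoc]
    rw [e1, hV1, Matrix.mul_one, Matrix.diagonal_mul_diagonal]
    rfl
  have hKμ : (∑ i, ∑ j, Complex.normSq (Δ i j)) = ∑ i, μ i ^ 2 := by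
    apply Complex.ofReal_injective
    calc ((∑ i, ∑ j, Complex.normSq (Δ i j) : ℝ) : ℂ) = (Δᴴ * Δ).trace := (traceAux Δ).symm
      _ = (Matrix.diagonal fun i => ((μ i : ℝ) : ℂ) * ((μ i : ℝ) : ℂ)).trace := by
          rw [hΔΔ, Matrix.trace_mul_cycle, hV1, Matrix.one_mul]
      _ = ((∑ i, μ i ^ 2 : ℝ) : ℂ) := by
          rw [Matrix.trace_diagonal]
          push_cast
          simp only [pow_two]
  -- trace norm of Δ
  have hTN : traceNorm Δ = ∑ i, |μ i| := by
    set S0 : Matrix n n ℂ := V * Matrix.diagonal (fun i => ((|μ i| : ℝ) : ℂ)) * star V with hS0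
    have hS0sq : S0 ^ 2 = Δᴴ * Δ := by
      rw [pow_two, hΔΔ]
      have e1 : S0 * S0 = V * (Matrix.diagonal (fun i => ((|μ i| : ℝ) : ℂ)) * (star V * V) *
          Matrix.diagonal (fun i => ((|μ i| : ℝ) : ℂ))) * star V := by
        simp only [hS0, Matrix.mul_assoc]
      rw [e1, hV1, Matrix.mul_one, Matrix.diagonal_mul_diagonal]
      have e2 : (fun i => ((|μ i| : ℝ) : ℂ) * ((|μ i| : ℝ) : ℂ))
          = fun i => ((μ i : ℝ) : ℂ) * ((μ i : ℝ) : ℂ) := funext fun i => by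
        rw [← Complex.ofReal_mul, ← Complex.ofReal_mul, abs_mul_abs_self]
      rw [e2]
    have hS0psd : S0.PosSemidef := by
      have hW : S0 = (Matrix.diagonal (fun i => ((Real.sqrt |μ i| : ℝ) : ℂ)) * star V)ᴴ *
          (Matrix.diagonal (fun i => ((Real.sqrt |μ i| : ℝ) : ℂ)) * star V) := by
        rw [Matrix.conjTranspose_mul, Matrix.diagonal_conjTranspose,
          Matrix.star_eq_conjTranspose, Matrix.conjTranspose_conjTranspose]
        have e3 : (star fun i => ((Real.sqrt |μ i| : ℝ) : ℂ))
            = fun i => ((Real.sqrt |μ i| : ℝ) : ℂ) := funext fun i => by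
          simp [Pi.star_apply, Complex.star_def, Complex.conj_ofReal]
        rw [e3, hS0]
        have e4 : V * Matrix.diagonal (fun i => ((Real.sqrt |μ i| : ℝ) : ℂ)) *
            (Matrix.diagonal (fun i => ((Real.sqrt |μ i| : ℝ) : ℂ)) * Vᴴ)
            = V * (Matrix.diagonal (fun i => ((Real.sqrt |μ i| : ℝ) : ℂ)) *
              Matrix.diagonal (fun i => ((Real.sqrt |μ i| : ℝ) : ℂ))) * Vᴴ := by
          simp only [Matrix.mul_assoc]
        rw [e4, Matrix.diagonal_mul_diagonal]
        have e5 : (fun i => ((Real.sqrt |μ i| : ℝ) : ℂ) * ((Real.sqrt |μ i| : ℝ) : ℂ))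
            = fun i => ((|μ i| : ℝ) : ℂ) := funext fun i => by
          rw [← Complex.ofReal_mul, Real.mul_self_sqrt (abs_nonneg _)]
        rw [e5, Matrix.star_eq_conjTranspose]
      rw [hW]
      exact Matrix.posSemidef_conjTranspose_mul_self _
    have heq := eqSqrtAux hS0psd (Matrix.posSemidef_conjTranspose_mul_self Δ) hS0sq
    rw [traceNorm, ← heq]
    have htrS0 : S0.trace = ((∑ i, |μ i| : ℝ) : ℂ) := by
      rw [hS0, Matrix.trace_mul_cycle, hV1, Matrix.one_mul, Matrix.trace_diagonal]
      push_cast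
      rfl
    rw [htrS0, Complex.ofReal_re]
  have hKT : K ≤ traceNorm Δ ^ 2 := by
    rw [hKB, hKμ, hTN]
    calc (∑ i, μ i ^ 2) = ∑ i, |μ i| ^ 2 := by simp [sq_abs]
      _ ≤ (∑ i, |μ i|) ^ 2 := Finset.sum_sq_le_sq_sum_of_nonneg fun i _ => abs_nonneg _
  -- operator norm bound
  have hRn : ∀ s : ℝ, 0 < s → ‖(ρ + (s:ℂ) • 1)⁻¹‖ ≤ (lamMin + s)⁻¹ := by
    intro s hs
    have hls : (0:ℝ) < lamMin + s := by linarith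
    rw [hRdef s hs]
    haveI : Nontrivial (Matrix n n ℂ) := by
      refine ⟨0, 1, fun h => ?_⟩
      have := congrFun (congrFun h (Classical.arbitrary n)) (Classical.arbitrary n)
      simp [Matrix.one_apply] at this
    have hUn : ‖U‖ = 1 := by
      rw [hU_def]; exact CStarRing.norm_coe_unitary hρ.1.eigenvectorUnitary
    have hD : ‖Matrix.diagonal (fun i => (((d i + s : ℝ) : ℂ))⁻¹)‖ ≤ (lamMin + s)⁻¹ := by
      apply diagNormAux _ _ (inv_pos.2 hls).le
      intro i
      rw [norm_inv, Complex.norm_real, Real.norm_eq_abs, abs_of_pos (by linarith [hd0 i] : (0:ℝ) < d i + s)]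
      exact inv_anti₀ hls (by linarith [hd i])
    calc ‖U * Matrix.diagonal (fun i => (((d i + s : ℝ) : ℂ))⁻¹) * star U‖
        ≤ ‖U * Matrix.diagonal (fun i => (((d i + s : ℝ) : ℂ))⁻¹)‖ * ‖star U‖ :=
          Matrix.l2_opNorm_mul _ _
      _ ≤ (‖U‖ * ‖Matrix.diagonal (fun i => (((d i + s : ℝ) : ℂ))⁻¹)‖) * ‖star U‖ :=
          mul_le_mul_of_nonneg_right (Matrix.l2_opNorm_mul _ _) (norm_nonneg _)
      _ = ‖Matrix.diagonal (fun i => (((d i + s : ℝ) : ℂ))⁻¹)‖ := by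
          rw [Matrix.star_eq_conjTranspose, Matrix.l2_opNorm_conjTranspose, hUn]; ring
      _ ≤ (lamMin + s)⁻¹ := hD
  -- integrability
  have hg0 := (integralAux hpos).1
  have hJ := (integralAux hpos).2
  have hApl : Continuous fun s : ℝ => ρ + (s:ℂ) • (1 : Matrix n n ℂ) :=
    continuous_const.add (Complex.continuous_ofReal.smul continuous_const)
  have hdetne : ∀ s ∈ Set.Ioi (0:ℝ), (ρ + (s:ℂ) • 1).det ≠ 0 := by
    intro s hs
    have h := hmulinv s hs
    have hu : IsUnit (ρ + (s:ℂ) • 1) :=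
      ⟨⟨ρ + (s:ℂ) • 1, U * Matrix.diagonal (fun i => (((d i + s : ℝ) : ℂ))⁻¹) * star U,
        mul_eq_one_comm.mp h, h⟩, rfl⟩
    exact ((Matrix.isUnit_iff_isUnit_det _).mp hu).ne_zero
  have hRcont : ContinuousOn (fun s : ℝ => (ρ + (s:ℂ) • 1)⁻¹) (Set.Ioi 0) := by
    have heq : ∀ s ∈ Set.Ioi (0:ℝ),
        ((ρ + (s:ℂ) • 1).det)⁻¹ • (ρ + (s:ℂ) • 1).adjugate = (ρ + (s:ℂ) • 1)⁻¹ := by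
      intro s hs; rw [Matrix.inv_def, Ring.inverse_eq_inv']
    refine ContinuousOn.congr ?_ fun s hs => (heq s hs).symm
    exact (hApl.matrix_det.continuousOn.inv₀ hdetne).smul hApl.matrix_adjugate.continuousOn
  have hFcont : ContinuousOn (fun s : ℝ => (s:ℂ) • ((ρ + (s:ℂ) • 1)⁻¹ * Δ * (ρ + (s:ℂ) • 1)⁻¹ *
      Δ * (ρ + (s:ℂ) • 1)⁻¹)) (Set.Ioi 0) :=
    Complex.continuous_ofReal.continuousOn.smul
      ((((hRcont.mul continuousOn_const).mul hRcont).mul continuousOn_const).mul hRcont)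
  have hFmeas : AEStronglyMeasurable (fun s : ℝ => (s:ℂ) • ((ρ + (s:ℂ) • 1)⁻¹ * Δ *
      (ρ + (s:ℂ) • 1)⁻¹ * Δ * (ρ + (s:ℂ) • 1)⁻¹)) (volume.restrict (Set.Ioi 0)) :=
    hFcont.aestronglyMeasurable measurableSet_Ioi
  have hFbound : ∀ s ∈ Set.Ioi (0:ℝ),
      ‖(s:ℂ) • ((ρ + (s:ℂ) • 1)⁻¹ * Δ * (ρ + (s:ℂ) • 1)⁻¹ * Δ * (ρ + (s:ℂ) • 1)⁻¹)‖
        ≤ ‖Δ‖ ^ 2 * (s * ((lamMin + s)⁻¹) ^ 3) := by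
    intro s hs
    have hs' : (0:ℝ) < s := hs
    have hls : (0:ℝ) < lamMin + s := by linarith
    have hR := hRn s hs'
    rw [norm_smul, Complex.norm_real, Real.norm_eq_abs, abs_of_pos hs']
    have c1 : ‖(ρ + (s:ℂ) • 1)⁻¹ * Δ * (ρ + (s:ℂ) • 1)⁻¹ * Δ * (ρ + (s:ℂ) • 1)⁻¹‖
        ≤ ‖(ρ + (s:ℂ) • 1)⁻¹‖ * ‖Δ‖ * ‖(ρ + (s:ℂ) • 1)⁻¹‖ * ‖Δ‖ * ‖(ρ + (s:ℂ) • 1)⁻¹‖ := by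
      calc ‖(ρ + (s:ℂ) • 1)⁻¹ * Δ * (ρ + (s:ℂ) • 1)⁻¹ * Δ * (ρ + (s:ℂ) • 1)⁻¹‖
          ≤ ‖(ρ + (s:ℂ) • 1)⁻¹ * Δ * (ρ + (s:ℂ) • 1)⁻¹ * Δ‖ * ‖(ρ + (s:ℂ) • 1)⁻¹‖ :=
            Matrix.l2_opNorm_mul _ _
        _ ≤ (‖(ρ + (s:ℂ) • 1)⁻¹ * Δ * (ρ + (s:ℂ) • 1)⁻¹‖ * ‖Δ‖) * ‖(ρ + (s:ℂ) • 1)⁻¹‖ :=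
            mul_le_mul_of_nonneg_right (Matrix.l2_opNorm_mul _ _) (norm_nonneg _)
        _ ≤ ((‖(ρ + (s:ℂ) • 1)⁻¹ * Δ‖ * ‖(ρ + (s:ℂ) • 1)⁻¹‖) * ‖Δ‖) * ‖(ρ + (s:ℂ) • 1)⁻¹‖ := by
            apply mul_le_mul_of_nonneg_right _ (norm_nonneg _)
            exact mul_le_mul_of_nonneg_right (Matrix.l2_opNorm_mul _ _) (norm_nonneg _)
        _ ≤ (((‖(ρ + (s:ℂ) • 1)⁻¹‖ * ‖Δ‖) * ‖(ρ + (s:ℂ) • 1)⁻¹‖) * ‖Δ‖) * ‖(ρ + (s:ℂ) • 1)⁻¹‖ := by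
            apply mul_le_mul_of_nonneg_right _ (norm_nonneg _)
            apply mul_le_mul_of_nonneg_right _ (norm_nonneg _)
            exact mul_le_mul_of_nonneg_right (Matrix.l2_opNorm_mul _ _) (norm_nonneg _)
        _ = _ := by ring
    have c2 : ‖(ρ + (s:ℂ) • 1)⁻¹‖ * ‖Δ‖ * ‖(ρ + (s:ℂ) • 1)⁻¹‖ * ‖Δ‖ * ‖(ρ + (s:ℂ) • 1)⁻¹‖
        ≤ (lamMin + s)⁻¹ * ‖Δ‖ * (lamMin + s)⁻¹ * ‖Δ‖ * (lamMin + s)⁻¹ := by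
      gcongr <;> first | exact norm_nonneg _ | exact hR | positivity
    calc s * ‖(ρ + (s:ℂ) • 1)⁻¹ * Δ * (ρ + (s:ℂ) • 1)⁻¹ * Δ * (ρ + (s:ℂ) • 1)⁻¹‖
        ≤ s * ((lamMin + s)⁻¹ * ‖Δ‖ * (lamMin + s)⁻¹ * ‖Δ‖ * (lamMin + s)⁻¹) :=
          mul_le_mul_of_nonneg_left (c1.trans c2) hs'.le
      _ = ‖Δ‖ ^ 2 * (s * ((lamMin + s)⁻¹) ^ 3) := by ring
  have hFint : IntegrableOn (fun s : ℝ => (s:ℂ) • ((ρ + (s:ℂ) • 1)⁻¹ * Δ * (ρ + (s:ℂ) • 1)⁻¹ *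
      Δ * (ρ + (s:ℂ) • 1)⁻¹)) (Set.Ioi 0) := by
    apply Integrable.mono' (hg0.const_mul (‖Δ‖ ^ 2)) hFmeas
    exact (ae_restrict_iff' measurableSet_Ioi).2 (Filter.Eventually.of_forall hFbound)
  -- swap trace and integral
  have hswap : (∫ s : ℝ in Set.Ioi 0, (s:ℂ) • ((ρ + (s:ℂ) • 1)⁻¹ * Δ * (ρ + (s:ℂ) • 1)⁻¹ * Δ *
        (ρ + (s:ℂ) • 1)⁻¹)).trace
      = ∫ s : ℝ in Set.Ioi 0, ((s:ℂ) • ((ρ + (s:ℂ) • 1)⁻¹ * Δ * (ρ + (s:ℂ) • 1)⁻¹ * Δ *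
        (ρ + (s:ℂ) • 1)⁻¹)).trace := by
    have h := (LinearMap.toContinuousLinearMap
      (Matrix.traceLinearMap n ℂ ℂ)).integral_comp_comm hFint
    exact h.symm
  rw [hswap]
  have hptw : ∀ s ∈ Set.Ioi (0:ℝ),
      ‖((s:ℂ) • ((ρ + (s:ℂ) • 1)⁻¹ * Δ * (ρ + (s:ℂ) • 1)⁻¹ * Δ * (ρ + (s:ℂ) • 1)⁻¹)).trace‖
        ≤ K * (s * ((lamMin + s)⁻¹) ^ 3) := by
    intro s hs
    have hs' : (0:ℝ) < s := hs
    rw [Matrix.trace_smul, htr s hs', smul_eq_mul, norm_mul, Complex.norm_real,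
      Real.norm_eq_abs, abs_of_pos hs', Complex.norm_real, Real.norm_eq_abs,
      abs_of_nonneg (hsum_nonneg s hs')]
    calc s * (∑ i, ∑ j, ((d i + s)⁻¹) ^ 2 * (d j + s)⁻¹ * Complex.normSq (B i j))
        ≤ s * (((lamMin + s)⁻¹) ^ 3 * K) := mul_le_mul_of_nonneg_left (hbound s hs') hs'.le
      _ = K * (s * ((lamMin + s)⁻¹) ^ 3) := by ring
  have hK0 : 0 ≤ K :=
    Finset.sum_nonneg fun i _ => Finset.sum_nonneg fun j _ => Complex.normSq_nonneg _
  calc ‖∫ s : ℝ in Set.Ioi 0, ((s:ℂ) • ((ρ + (s:ℂ) • 1)⁻¹ * Δ * (ρ + (s:ℂ) • 1)⁻¹ * Δ *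
          (ρ + (s:ℂ) • 1)⁻¹)).trace‖
      ≤ ∫ s : ℝ in Set.Ioi 0, K * (s * ((lamMin + s)⁻¹) ^ 3) := by
        apply norm_integral_le_of_norm_le (hg0.const_mul K)
        exact (ae_restrict_iff' measurableSet_Ioi).2 (Filter.Eventually.of_forall hptw)
    _ = K * (1 / (2 * lamMin)) := by rw [MeasureTheory.integral_const_mul, hJ]
    _ ≤ traceNorm Δ ^ 2 * (1 / (2 * lamMin)) :=
        mul_le_mul_of_nonneg_right hKT (by positivity)
    _ = traceNorm Δ ^ 2 / (2 * lamMin) := by ring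
end
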